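/- arXiv:1504.05994 — 3 statements merged into one kernel-verified Lean document; each statement's English description precedes it below -/
import Mathlib

section
/- As ℓ → ∞, the Gaussian process quadrature weights with squared exponential covariance and 1-D UT sigma points converge to the UT weights: the limit of W_0(ℓ) is κ/(κ+1) and the limits of W_1(ℓ) and W_2(ℓ) are both 1/(2(κ+1)), where W_0(ℓ) = e^(-(κ+1)/(2(ℓ²+1))) ℓ (e^((κ+1)/(2(ℓ²+1))) - 2e^(3(κ+1)/(2ℓ²)) + e^((κ+1)/(2(ℓ²+1))) e^(2(κ+1)/ℓ²)) / (√(ℓ²+1) (e^((κ+1)/ℓ²) - 1)²) and W_1(ℓ) = W_2(ℓ) = -ℓ e^((2ℓ²+3)(κ+1)/(2ℓ²(ℓ²+1))) (e^((κ+1)/(2(ℓ²+1))) - e^((κ+1)/(2ℓ²))) / (√(ℓ²+1) (e^((κ+1)/ℓ²) - 1)²). -/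
open Filter Real

lemma aux_exp_slope :
    Tendsto (fun x : ℝ => (Real.exp x - 1) / x) (nhdsWithin 0 {0}ᶜ) (nhds 1) := by
  have h := Real.hasDerivAt_exp 0
  rw [hasDerivAt_iff_tendsto_slope] at h
  simpa [slope_fun_def, Real.exp_zero, div_eq_inv_mul] using h

lemma aux_div_ne (c : ℝ) (hc : 0 < c) {g : ℝ → ℝ} (hg : Tendsto g atTop atTop) :
    Tendsto (fun ℓ => c / g ℓ) atTop (nhdsWithin 0 {0}ᶜ) := by
  apply tendsto_nhdsWithin_of_tendsto_nhds_of_eventually_within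
  · exact Tendsto.div_atTop tendsto_const_nhds hg
  · filter_upwards [hg.eventually_gt_atTop 0] with ℓ hℓ
    exact ne_of_gt (div_pos hc hℓ)

lemma aux_key (c : ℝ) (hc : 0 < c) {g : ℝ → ℝ} (hg : Tendsto g atTop atTop) :
    Tendsto (fun ℓ => g ℓ * (Real.exp (c / g ℓ) - 1)) atTop (nhds c) := by
  have h : Tendsto (fun ℓ => c * ((Real.exp (c / g ℓ) - 1) / (c / g ℓ))) atTop (nhds (c * 1)) :=
    (aux_exp_slope.comp (aux_div_ne c hc hg)).const_mul c
  rw [mul_one] at h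
  refine h.congr' ?_
  filter_upwards [hg.eventually_gt_atTop 0] with ℓ hℓ
  field_simp

lemma aux_sq_atTop : Tendsto (fun ℓ : ℝ => ℓ ^ 2) atTop atTop :=
  tendsto_pow_atTop two_ne_zero

lemma aux_T_atTop : Tendsto (fun ℓ : ℝ => ℓ ^ 2 + 1) atTop atTop :=
  tendsto_atTop_add_const_right _ 1 aux_sq_atTop

lemma aux_G_atTop : Tendsto (fun ℓ : ℝ => 2 * ℓ ^ 2 * (ℓ ^ 2 + 1)) atTop atTop :=
  (aux_sq_atTop.const_mul_atTop two_pos).atTop_mul_atTop₀ aux_T_atTop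

lemma aux_two_sq_atTop : Tendsto (fun ℓ : ℝ => 2 * ℓ ^ 2) atTop atTop :=
  aux_sq_atTop.const_mul_atTop two_pos

lemma aux_invT : Tendsto (fun ℓ : ℝ => 1 / (ℓ ^ 2 + 1)) atTop (nhds 0) :=
  Tendsto.div_atTop tendsto_const_nhds aux_T_atTop

lemma aux_sqrt : Tendsto (fun ℓ : ℝ => ℓ / Real.sqrt (ℓ ^ 2 + 1)) atTop (nhds 1) := by
  have h1 : Tendsto (fun ℓ : ℝ => 1 - 1 / (ℓ ^ 2 + 1)) atTop (nhds 1) := by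
    simpa using tendsto_const_nhds.sub aux_invT
  have h2 : Tendsto (fun ℓ : ℝ => Real.sqrt (1 - 1 / (ℓ ^ 2 + 1))) atTop (nhds 1) := by
    have := (Real.continuous_sqrt.tendsto 1).comp h1
    simpa [Function.comp_def] using this
  refine h2.congr' ?_
  filter_upwards [eventually_ge_atTop (0:ℝ)] with ℓ hℓ
  have hT : (0:ℝ) < ℓ ^ 2 + 1 := by positivity
  have : 1 - 1 / (ℓ ^ 2 + 1) = ℓ ^ 2 / (ℓ ^ 2 + 1) := by field_simp; ring
  rw [this, Real.sqrt_div (by positivity), Real.sqrt_sq hℓ]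

lemma aux_N (c : ℝ) (hc : 0 < c) :
    Tendsto (fun ℓ : ℝ => ℓ ^ 4 * (Real.exp (c / (2 * ℓ ^ 2 * (ℓ ^ 2 + 1))) - 1))
      atTop (nhds (c / 2)) := by
  have hG := aux_key c hc aux_G_atTop
  have hr : Tendsto (fun ℓ : ℝ => 1 / 2 - 1 / (2 * (ℓ ^ 2 + 1))) atTop (nhds (1 / 2)) := by
    have : Tendsto (fun ℓ : ℝ => 1 / (2 * (ℓ ^ 2 + 1))) atTop (nhds 0) :=
      Tendsto.div_atTop tendsto_const_nhds (aux_T_atTop.const_mul_atTop two_pos)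
    simpa using tendsto_const_nhds.sub this
  have hmul := hG.mul hr
  have : c * (1 / 2) = c / 2 := by ring
  rw [this] at hmul
  refine hmul.congr' ?_
  filter_upwards [eventually_ge_atTop (1:ℝ)] with ℓ hℓ
  have hℓ0 : ℓ ≠ 0 := by linarith
  have hT : (ℓ:ℝ) ^ 2 + 1 ≠ 0 := by positivity
  field_simp
  ring

lemma aux_exp_one (c : ℝ) {g : ℝ → ℝ} (hg : Tendsto g atTop atTop) :
    Tendsto (fun ℓ => Real.exp (c / g ℓ)) atTop (nhds 1) := by
  have h0 : Tendsto (fun ℓ => c / g ℓ) atTop (nhds 0) :=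
    Tendsto.div_atTop tendsto_const_nhds hg
  have := (Real.continuous_exp.tendsto 0).comp h0
  simpa [Function.comp_def] using this

theorem gpq_se_weights_tendsto_ut_weights (κ : ℝ) (hκ : 0 < κ) :
    Tendsto
      (fun ℓ : ℝ =>
        Real.exp (-(κ + 1) / (2 * (ℓ ^ 2 + 1))) * ℓ *
            (Real.exp ((κ + 1) / (2 * (ℓ ^ 2 + 1)))
              - 2 * Real.exp (3 * (κ + 1) / (2 * ℓ ^ 2))
              + Real.exp ((κ + 1) / (2 * (ℓ ^ 2 + 1))) * Real.exp (2 * (κ + 1) / ℓ ^ 2)) /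
          (Real.sqrt (ℓ ^ 2 + 1) * (Real.exp ((κ + 1) / ℓ ^ 2) - 1) ^ 2))
      atTop (nhds (κ / (κ + 1)))
    ∧
    Tendsto
      (fun ℓ : ℝ =>
        -(ℓ * Real.exp ((2 * ℓ ^ 2 + 3) * (κ + 1) / (2 * ℓ ^ 2 * (ℓ ^ 2 + 1))) *
            (Real.exp ((κ + 1) / (2 * (ℓ ^ 2 + 1))) - Real.exp ((κ + 1) / (2 * ℓ ^ 2)))) /
          (Real.sqrt (ℓ ^ 2 + 1) * (Real.exp ((κ + 1) / ℓ ^ 2) - 1) ^ 2))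
      atTop (nhds (1 / (2 * (κ + 1)))) := by
  set c : ℝ := κ + 1 with hc_def
  have hc : 0 < c := by positivity
  have hE : Tendsto (fun ℓ : ℝ => Real.exp (c / ℓ ^ 2)) atTop (nhds 1) :=
    aux_exp_one c aux_sq_atTop
  have hq : Tendsto (fun ℓ : ℝ => Real.exp (c / (2 * ℓ ^ 2))) atTop (nhds 1) :=
    aux_exp_one c aux_two_sq_atTop
  have hN := aux_N c hc
  have hD : Tendsto (fun ℓ : ℝ => ℓ ^ 2 * (Real.exp (c / ℓ ^ 2) - 1)) atTop (nhds c) :=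
    aux_key c hc aux_sq_atTop
  have hD2 : Tendsto (fun ℓ : ℝ => (ℓ ^ 2 * (Real.exp (c / ℓ ^ 2) - 1)) ^ 2) atTop
      (nhds (c ^ 2)) := hD.pow 2
  have hc2 : (c : ℝ) ^ 2 ≠ 0 := pow_ne_zero 2 hc.ne'
  -- common eventual facts
  have hev : ∀ᶠ ℓ : ℝ in atTop, (1:ℝ) ≤ ℓ := eventually_ge_atTop 1
  constructor
  · -- W0
    have hlim : Tendsto (fun ℓ : ℝ =>
        ℓ / Real.sqrt (ℓ ^ 2 + 1) *
          (1 - 2 * Real.exp (c / ℓ ^ 2) *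
              (ℓ ^ 4 * (Real.exp (c / (2 * ℓ ^ 2 * (ℓ ^ 2 + 1))) - 1)) /
            (ℓ ^ 2 * (Real.exp (c / ℓ ^ 2) - 1)) ^ 2)) atTop
        (nhds (1 * (1 - 2 * 1 * (c / 2) / c ^ 2))) :=
      aux_sqrt.mul (tendsto_const_nhds.sub ((((hE.const_mul 2)).mul hN).div hD2 hc2))
    have hval : (1 : ℝ) * (1 - 2 * 1 * (c / 2) / c ^ 2) = κ / (κ + 1) := by
      rw [hc_def]
      have : κ + 1 ≠ 0 := by positivity
      field_simp
      ring
    rw [hval] at hlim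
    refine hlim.congr' ?_
    filter_upwards [hev] with ℓ hℓ
    have hℓ0 : (0:ℝ) < ℓ := by linarith
    have hℓne : ℓ ≠ 0 := hℓ0.ne'
    have hT : (0:ℝ) < ℓ ^ 2 + 1 := by positivity
    have hsq : Real.sqrt (ℓ ^ 2 + 1) ≠ 0 := (Real.sqrt_pos.mpr hT).ne'
    have hE1 : Real.exp (c / ℓ ^ 2) - 1 ≠ 0 := by
      have : (1:ℝ) < Real.exp (c / ℓ ^ 2) := by
        rw [show (1:ℝ) = Real.exp 0 from (Real.exp_zero).symm]
        exact Real.exp_lt_exp.mpr (by positivity)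
      linarith
    have rel1 : Real.exp (3 * c / (2 * ℓ ^ 2)) =
        Real.exp (c / (2 * (ℓ ^ 2 + 1))) * Real.exp (c / ℓ ^ 2) *
          Real.exp (c / (2 * ℓ ^ 2 * (ℓ ^ 2 + 1))) := by
      rw [← Real.exp_add, ← Real.exp_add]
      congr 1
      field_simp
      ring
    have rel2 : Real.exp (2 * c / ℓ ^ 2) =
        Real.exp (c / ℓ ^ 2) * Real.exp (c / ℓ ^ 2) := by
      rw [← Real.exp_add]; congr 1; field_simp; ring
    have rel3 : Real.exp (-c / (2 * (ℓ ^ 2 + 1))) =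
        (Real.exp (c / (2 * (ℓ ^ 2 + 1))))⁻¹ := by
      rw [neg_div, Real.exp_neg]
    have hp : Real.exp (c / (2 * (ℓ ^ 2 + 1))) ≠ 0 := (Real.exp_pos _).ne'
    rw [rel1, rel2, rel3]
    field_simp
    ring
  · -- W1
    have hlim : Tendsto (fun ℓ : ℝ =>
        ℓ / Real.sqrt (ℓ ^ 2 + 1) * Real.exp (c / ℓ ^ 2) * Real.exp (c / (2 * ℓ ^ 2)) *
          (ℓ ^ 4 * (Real.exp (c / (2 * ℓ ^ 2 * (ℓ ^ 2 + 1))) - 1)) /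
            (ℓ ^ 2 * (Real.exp (c / ℓ ^ 2) - 1)) ^ 2) atTop
        (nhds (1 * 1 * 1 * (c / 2) / c ^ 2)) :=
      (((aux_sqrt.mul hE).mul hq).mul hN).div hD2 hc2
    have hval : (1 : ℝ) * 1 * 1 * (c / 2) / c ^ 2 = 1 / (2 * (κ + 1)) := by
      rw [hc_def]
      have : κ + 1 ≠ 0 := by positivity
      field_simp
    rw [hval] at hlim
    refine hlim.congr' ?_
    filter_upwards [hev] with ℓ hℓ
    have hℓ0 : (0:ℝ) < ℓ := by linarith
    have hℓne : ℓ ≠ 0 := hℓ0.ne'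
    have hT : (0:ℝ) < ℓ ^ 2 + 1 := by positivity
    have hsq : Real.sqrt (ℓ ^ 2 + 1) ≠ 0 := (Real.sqrt_pos.mpr hT).ne'
    have hE1 : Real.exp (c / ℓ ^ 2) - 1 ≠ 0 := by
      have : (1:ℝ) < Real.exp (c / ℓ ^ 2) := by
        rw [show (1:ℝ) = Real.exp 0 from (Real.exp_zero).symm]
        exact Real.exp_lt_exp.mpr (by positivity)
      linarith
    have relq : Real.exp (c / (2 * ℓ ^ 2)) =
        Real.exp (c / (2 * (ℓ ^ 2 + 1))) * Real.exp (c / (2 * ℓ ^ 2 * (ℓ ^ 2 + 1))) := by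
      rw [← Real.exp_add]; congr 1; field_simp
    have relb : Real.exp ((2 * ℓ ^ 2 + 3) * c / (2 * ℓ ^ 2 * (ℓ ^ 2 + 1))) =
        Real.exp (c / ℓ ^ 2) * Real.exp (c / (2 * ℓ ^ 2 * (ℓ ^ 2 + 1))) := by
      rw [← Real.exp_add]; congr 1; field_simp; ring
    rw [relq, relb]
    field_simp
    ring
end

section
/- If a quadrature rule (weights W_i, nodes ξ_i, i = 1,...,N) integrates exactly all functions of the form g(ξ) = ∑_{|I| ≤ P} c_I H_I(ξ) for arbitrary coefficients c_I against N(0, I_n), then the posterior variance of the Gaussian process quadrature with covariance K(ξ,ξ') = ∑_{|I|,|J| ≤ P} (1/(I! J!)) λ_{I,J} H_I(ξ) H_J(ξ') is zero, for any symmetric positive semidefinite matrix Λ = [λ_{I,J}]. -/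
open MeasureTheory

/-- Probabilists' Hermite polynomial via the Rodrigues formula. -/
noncomputable def hermiteP (p : ℕ) (x : ℝ) : ℝ :=
  (-1) ^ p * Real.exp (x ^ 2 / 2) *
    iteratedDeriv p (fun y : ℝ => Real.exp (-y ^ 2 / 2)) x

/-- Multivariate probabilists' Hermite polynomial indexed by a multi-index. -/
noncomputable def hermiteMulti {n : ℕ} (I : Fin n → ℕ) (x : Fin n → ℝ) : ℝ :=
  ∏ k, hermiteP (I k) (x k)

/-- The set of multi-indices of dimension `n` with total degree at most `P`. -/
def multiIdx (n P : ℕ) : Finset (Fin n → ℕ) :=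
  (Fintype.piFinset fun _ : Fin n => Finset.range (P + 1)).filter fun I => ∑ k, I k ≤ P

/-- Multi-index factorial `I! = i₁! ⋯ iₙ!` as a real number. -/
noncomputable def mfact {n : ℕ} (I : Fin n → ℕ) : ℝ :=
  ∏ k, ((I k).factorial : ℝ)

/-- Standard `n`-dimensional Gaussian density. -/
noncomputable def stdGauss (n : ℕ) (x : Fin n → ℝ) : ℝ :=
  ((Real.sqrt (2 * Real.pi)) ^ n)⁻¹ * Real.exp (-(∑ k, (x k) ^ 2) / 2)

theorem gpq_polynomial_kernel_zero_variance
    (n N P : ℕ) (ξ : Fin N → Fin n → ℝ) (W : Fin N → ℝ)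
    (Λ : (Fin n → ℕ) → (Fin n → ℕ) → ℝ)
    (hΛsymm : ∀ I J, Λ I J = Λ J I)
    (hΛpsd : ∀ c : (Fin n → ℕ) → ℝ,
      0 ≤ ∑ I ∈ multiIdx n P, ∑ J ∈ multiIdx n P, c I * c J * Λ I J)
    (K : (Fin n → ℝ) → (Fin n → ℝ) → ℝ)
    (hK : ∀ u v, K u v = ∑ I ∈ multiIdx n P, ∑ J ∈ multiIdx n P,
      (1 / (mfact I * mfact J)) * Λ I J * hermiteMulti I u * hermiteMulti J v)
    (G : Matrix (Fin N) (Fin N) ℝ)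
    (hG : ∀ i j, G i j = K (ξ i) (ξ j))
    (hGinv : IsUnit G.det)
    (kbar : Fin N → ℝ)
    (hkbar : ∀ i, kbar i = ∫ u : Fin n → ℝ, K u (ξ i) * stdGauss n u)
    (hexact : ∀ c : (Fin n → ℕ) → ℝ,
      ∑ i, W i * (∑ I ∈ multiIdx n P, c I * hermiteMulti I (ξ i)) =
        ∫ u : Fin n → ℝ,
          (∑ I ∈ multiIdx n P, c I * hermiteMulti I u) * stdGauss n u) :
    (∫ u : Fin n → ℝ, ∫ v : Fin n → ℝ, K u v * stdGauss n u * stdGauss n v)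
      - dotProduct kbar (G⁻¹.mulVec kbar) = 0 := by
  have Ksymm : ∀ u v, K u v = K v u := by
    intro u v
    rw [hK, hK, Finset.sum_comm]
    refine Finset.sum_congr rfl fun I _ => Finset.sum_congr rfl fun J _ => ?_
    rw [hΛsymm I J]; ring
  have poly : ∀ u v, K u v = ∑ I ∈ multiIdx n P,
      (∑ J ∈ multiIdx n P, (1 / (mfact I * mfact J)) * Λ I J * hermiteMulti J v)
        * hermiteMulti I u := by
    intro u v
    rw [hK]
    refine Finset.sum_congr rfl fun I _ => ?_
    rw [Finset.sum_mul]
    exact Finset.sum_congr rfl fun J _ => by ring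
  have quad : ∀ v, (∫ u : Fin n → ℝ, K u v * stdGauss n u) = ∑ j, W j * K (ξ j) v := by
    intro v
    have h := hexact (fun I => ∑ J ∈ multiIdx n P,
      (1 / (mfact I * mfact J)) * Λ I J * hermiteMulti J v)
    calc (∫ u : Fin n → ℝ, K u v * stdGauss n u)
        = ∫ u : Fin n → ℝ, (∑ I ∈ multiIdx n P,
            (∑ J ∈ multiIdx n P, (1 / (mfact I * mfact J)) * Λ I J * hermiteMulti J v)
              * hermiteMulti I u) * stdGauss n u := by
          congr 1; funext u; rw [← poly u v]
      _ = ∑ j, W j * (∑ I ∈ multiIdx n P,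
            (∑ J ∈ multiIdx n P, (1 / (mfact I * mfact J)) * Λ I J * hermiteMulti J v)
              * hermiteMulti I (ξ j)) := h.symm
      _ = ∑ j, W j * K (ξ j) v := by
          refine Finset.sum_congr rfl fun j _ => ?_
          rw [← poly (ξ j) v]
  -- coefficients for the polynomial u ↦ ∑ j, W j * K (ξ j) u
  set e : (Fin n → ℕ) → ℝ := fun I => ∑ j, W j *
    (∑ J ∈ multiIdx n P, (1 / (mfact I * mfact J)) * Λ I J * hermiteMulti J (ξ j)) with he
  have Qpoly : ∀ x : Fin n → ℝ,
      (∑ I ∈ multiIdx n P, e I * hermiteMulti I x) = ∑ j, W j * K (ξ j) x := by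
    intro x
    calc (∑ I ∈ multiIdx n P, e I * hermiteMulti I x)
        = ∑ I ∈ multiIdx n P, ∑ j, (W j *
            (∑ J ∈ multiIdx n P, (1 / (mfact I * mfact J)) * Λ I J * hermiteMulti J (ξ j)))
              * hermiteMulti I x := by
          refine Finset.sum_congr rfl fun I _ => ?_
          rw [he, Finset.sum_mul]
      _ = ∑ j, ∑ I ∈ multiIdx n P, (W j *
            (∑ J ∈ multiIdx n P, (1 / (mfact I * mfact J)) * Λ I J * hermiteMulti J (ξ j)))
              * hermiteMulti I x := Finset.sum_comm
      _ = ∑ j, W j * (∑ I ∈ multiIdx n P,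
            (∑ J ∈ multiIdx n P, (1 / (mfact I * mfact J)) * Λ I J * hermiteMulti J (ξ j))
              * hermiteMulti I x) := by
          refine Finset.sum_congr rfl fun j _ => ?_
          rw [Finset.mul_sum]
          exact Finset.sum_congr rfl fun I _ => by ring
      _ = ∑ j, W j * K (ξ j) x := by
          refine Finset.sum_congr rfl fun j _ => ?_
          rw [← poly x (ξ j), Ksymm x (ξ j)]
  have hdouble : (∫ u : Fin n → ℝ, ∫ v : Fin n → ℝ, K u v * stdGauss n u * stdGauss n v)
      = ∑ i, W i * ∑ j, W j * K (ξ j) (ξ i) := by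
    have h1 : ∀ u : Fin n → ℝ,
        (∫ v : Fin n → ℝ, K u v * stdGauss n u * stdGauss n v)
          = (∑ I ∈ multiIdx n P, e I * hermiteMulti I u) * stdGauss n u := by
      intro u
      have : (∫ v : Fin n → ℝ, K u v * stdGauss n u * stdGauss n v)
          = ∫ v : Fin n → ℝ, stdGauss n u * (K v u * stdGauss n v) := by
        congr 1; funext v; rw [Ksymm u v]; ring
      rw [this, MeasureTheory.integral_const_mul, quad u, Qpoly u]; ring
    calc (∫ u : Fin n → ℝ, ∫ v : Fin n → ℝ, K u v * stdGauss n u * stdGauss n v)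
        = ∫ u : Fin n → ℝ, (∑ I ∈ multiIdx n P, e I * hermiteMulti I u) * stdGauss n u := by
          congr 1; funext u; exact h1 u
      _ = ∑ i, W i * (∑ I ∈ multiIdx n P, e I * hermiteMulti I (ξ i)) := (hexact e).symm
      _ = ∑ i, W i * ∑ j, W j * K (ξ j) (ξ i) := by
          refine Finset.sum_congr rfl fun i _ => ?_
          rw [Qpoly (ξ i)]
  have hkbar2 : ∀ i, kbar i = ∑ j, W j * K (ξ j) (ξ i) := fun i => by
    rw [hkbar i, quad (ξ i)]
  have hkW : kbar = G.mulVec W := by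
    funext i
    rw [hkbar2 i]
    simp only [Matrix.mulVec, dotProduct]
    refine Finset.sum_congr rfl fun j _ => ?_
    rw [hG i j, Ksymm (ξ i) (ξ j)]; ring
  have hinv : G⁻¹.mulVec kbar = W := by
    rw [hkW, Matrix.mulVec_mulVec, Matrix.nonsing_inv_mul G hGinv, Matrix.one_mulVec]
  rw [hdouble, hinv, sub_eq_zero]
  simp only [dotProduct]
  refine Finset.sum_congr rfl fun i _ => ?_
  rw [hkbar2 i]; ring
end

section
/- Sigma-point covariance update preserves positive semidefiniteness: if S = Ĉ + R where Ĉ = ∑_i W_i (y_i - μ)(y_i - μ)ᵀ with W_i ≥ 0 and R positive definite, and C = ∑_i W_i (x_i - m)(y_i - μ)ᵀ is such that the block matrix [[P̂, C],[Cᵀ, Ĉ]] with P̂ = ∑_i W_i (x_i - m)(x_i - m)ᵀ is positive semidefinite, and P - P̂ is positive semidefinite, then P - C S^{-1} Cᵀ is positive semidefinite. -/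
open Matrix

theorem sigma_point_update_posSemidef
    (n d N : ℕ) (x : Fin N → Fin n → ℝ) (y : Fin N → Fin d → ℝ)
    (W : Fin N → ℝ) (hW : ∀ i, 0 ≤ W i)
    (m : Fin n → ℝ) (μ : Fin d → ℝ)
    (P : Matrix (Fin n) (Fin n) ℝ) (hPsymm : P.IsSymm)
    (R : Matrix (Fin d) (Fin d) ℝ) (hR : R.PosDef)
    (Phat : Matrix (Fin n) (Fin n) ℝ)
    (hPhat : ∀ a b, Phat a b = ∑ i, W i * ((x i a - m a) * (x i b - m b)))
    (Chat : Matrix (Fin d) (Fin d) ℝ)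
    (hChat : ∀ a b, Chat a b = ∑ i, W i * ((y i a - μ a) * (y i b - μ b)))
    (C : Matrix (Fin n) (Fin d) ℝ)
    (hC : ∀ a b, C a b = ∑ i, W i * ((x i a - m a) * (y i b - μ b)))
    (hblock : (Matrix.fromBlocks Phat C Cᵀ Chat).PosSemidef)
    (hPP : (P - Phat).PosSemidef)
    (S : Matrix (Fin d) (Fin d) ℝ) (hS : S = Chat + R) :
    (P - C * S⁻¹ * Cᵀ).PosSemidef := by
  have hChatPSD : Chat.PosSemidef := by
    have := hblock.submatrix (Sum.inr : Fin d → Fin n ⊕ Fin d)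
    convert this using 1
    ext i j
    simp [Matrix.fromBlocks]
  have hSpd : S.PosDef := by
    rw [hS, add_comm]
    exact hR.add_posSemidef hChatPSD
  have : Invertible S := S.invertibleOfIsUnitDet hSpd.det_pos.ne'.isUnit
  have hRinv : Invertible R := R.invertibleOfIsUnitDet hR.det_pos.ne'.isUnit
  have h0R : (Matrix.fromBlocks (0 : Matrix (Fin n) (Fin n) ℝ) 0 0 R).PosSemidef := by
    have h := (Matrix.PosDef.fromBlocks₂₂ (0 : Matrix (Fin n) (Fin n) ℝ)
      (0 : Matrix (Fin n) (Fin d) ℝ) hR).mpr (by simpa using Matrix.PosSemidef.zero)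
    simpa using h
  have hblock2 : (Matrix.fromBlocks Phat C Cᵀ S).PosSemidef := by
    have := hblock.add h0R
    simpa [Matrix.fromBlocks_add, hS] using this
  have hschur : (Phat - C * S⁻¹ * Cᵀ).PosSemidef := by
    have h := (Matrix.PosDef.fromBlocks₂₂ Phat C hSpd).mp (by simpa using hblock2)
    simpa using h
  have : P - C * S⁻¹ * Cᵀ = (P - Phat) + (Phat - C * S⁻¹ * Cᵀ) := by abel
  rw [this]
  exact hPP.add hschur
end
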